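/- For every real p with 0 < p < 1, one has (ln p)·(ln(1 - p)) ≤ (ln 2)², and equality holds if and only if p = 1/2. -/

import Mathlib

open Real Set

noncomputable def F (s : ℝ) : ℝ := Real.log (1 + Real.exp s)

lemma F_pos (s : ℝ) : 0 < F s := by
  have := Real.exp_pos s
  have : (1:ℝ) < 1 + Real.exp s := by linarith
  exact Real.log_pos this

lemma exp_F (s : ℝ) : Real.exp (F s) = 1 + Real.exp s := by
  have := Real.exp_pos s
  exact Real.exp_log (by linarith)

lemma F_strictMono : StrictMono F := fun a b hab => by
  have := Real.exp_pos a
  exact Real.log_lt_log (by linarith) (by have := Real.exp_lt_exp.2 hab; linarith)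

noncomputable def φ (t : ℝ) : ℝ := (1 - Real.exp (-t)) / t

lemma φ_strictAntiOn : StrictAntiOn φ (Ioi (0:ℝ)) := by
  apply strictAntiOn_of_deriv_neg (convex_Ioi 0)
  · apply ContinuousOn.div
    · exact (continuous_const.sub (Real.continuous_exp.comp continuous_neg)).continuousOn
    · exact continuousOn_id
    · intro x hx; exact ne_of_gt hx
  · intro t ht
    rw [interior_Ioi] at ht
    have ht0 : (0:ℝ) < t := ht
    have h1 : HasDerivAt (fun t : ℝ => 1 - Real.exp (-t)) (Real.exp (-t)) t := by
      have := ((Real.hasDerivAt_exp (-t)).comp t (hasDerivAt_neg t))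
      exact ((hasDerivAt_const t (1:ℝ)).sub this).congr_deriv (by simp)
    have h2 : HasDerivAt φ ((Real.exp (-t) * t - (1 - Real.exp (-t)) * 1) / t ^ 2) t :=
      h1.div (hasDerivAt_id t) (ne_of_gt ht0)
    rw [h2.deriv]
    have key : Real.exp (-t) * (t + 1) < 1 := by
      rw [← Real.exp_log (show (0:ℝ) < t + 1 by linarith), ← Real.exp_add]
      have hlt : Real.log (t + 1) < t := by
        have := Real.add_one_lt_exp (ne_of_gt ht0)
        calc Real.log (t + 1) < Real.log (Real.exp t) :=
              Real.log_lt_log (by linarith) (by linarith)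
          _ = t := Real.log_exp t
      have : -t + Real.log (t + 1) < 0 := by linarith
      calc Real.exp (-t + Real.log (t + 1)) < Real.exp 0 := Real.exp_lt_exp.2 this
        _ = 1 := Real.exp_zero
    have hnum : Real.exp (-t) * t - (1 - Real.exp (-t)) * 1 < 0 := by nlinarith
    have : (0:ℝ) < t ^ 2 := by positivity
    exact div_neg_of_neg_of_pos hnum this

noncomputable def G (s : ℝ) : ℝ := Real.log (F s)

lemma hasDerivAt_G (s : ℝ) : HasDerivAt G (Real.exp s / (1 + Real.exp s) / F s) s := by
  have h0 : (0:ℝ) < 1 + Real.exp s := by have := Real.exp_pos s; linarith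
  have h1 : HasDerivAt (fun s : ℝ => 1 + Real.exp s) (Real.exp s) s := by
    exact ((hasDerivAt_const s (1:ℝ)).add (Real.hasDerivAt_exp s)).congr_deriv (by simp)
  have h2 : HasDerivAt F (Real.exp s / (1 + Real.exp s)) s :=
    (Real.hasDerivAt_log (ne_of_gt h0)).comp s h1 |>.congr_deriv (by ring)
  exact (Real.hasDerivAt_log (ne_of_gt (F_pos s))).comp s h2 |>.congr_deriv (by ring)

lemma deriv_G_eq (s : ℝ) : deriv G s = φ (F s) := by
  rw [(hasDerivAt_G s).deriv]
  have h0 : (0:ℝ) < 1 + Real.exp s := by have := Real.exp_pos s; linarith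
  have : Real.exp (-(F s)) = 1 / (1 + Real.exp s) := by
    rw [Real.exp_neg, exp_F]; rw [one_div]
  unfold φ
  rw [this]
  field_simp
  ring

lemma deriv_G_strictAnti : StrictAnti (deriv G) := by
  intro a b hab
  rw [deriv_G_eq, deriv_G_eq]
  exact φ_strictAntiOn (F_pos a) (F_pos b) (F_strictMono hab)

lemma G_diff : Differentiable ℝ G := fun s => (hasDerivAt_G s).differentiableAt

lemma G_strictConcave : StrictConcaveOn ℝ univ G :=
  deriv_G_strictAnti.strictConcaveOn_univ_of_deriv G_diff.continuous

lemma F_mul_F_lt (s : ℝ) (hs : s ≠ 0) : F s * F (-s) < (Real.log 2) ^ 2 := by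
  have hne : s ≠ -s := by intro h; apply hs; linarith
  have h := G_strictConcave.2 (mem_univ s) (mem_univ (-s)) hne one_half_pos one_half_pos
    (by norm_num)
  have hmid : (1/2 : ℝ) • s + (1/2 : ℝ) • (-s) = 0 := by
    simp only [smul_eq_mul]; ring
  rw [hmid] at h
  have hG0 : G 0 = Real.log (Real.log 2) := by
    unfold G F; norm_num [Real.exp_zero]
  have hsum : G s + G (-s) < 2 * Real.log (Real.log 2) := by
    rw [hG0] at h
    have : (1/2:ℝ) • G s + (1/2:ℝ) • G (-s) < Real.log (Real.log 2) := h
    simp only [smul_eq_mul] at this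
    linarith
  have hlogprod : Real.log (F s * F (-s)) < Real.log ((Real.log 2) ^ 2) := by
    rw [Real.log_mul (ne_of_gt (F_pos s)) (ne_of_gt (F_pos (-s)))]
    rw [Real.log_pow]
    unfold G at hsum
    push_cast
    linarith
  have hpos : (0:ℝ) < F s * F (-s) := mul_pos (F_pos s) (F_pos (-s))
  have h2 : (0:ℝ) < (Real.log 2) ^ 2 := by
    have := Real.log_pos (by norm_num : (1:ℝ) < 2); positivity
  exact (Real.log_lt_log_iff hpos h2).mp hlogprod

/-- For every real `p` with `0 < p < 1`, `(ln p)·(ln (1 - p)) ≤ (ln 2)²`,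
with equality if and only if `p = 1/2`. -/
theorem bloom_log_mul_log_le (p : ℝ) (hp0 : 0 < p) (hp1 : p < 1) :
    Real.log p * Real.log (1 - p) ≤ (Real.log 2) ^ 2 ∧
      (Real.log p * Real.log (1 - p) = (Real.log 2) ^ 2 ↔ p = 1 / 2) := by
  have h1p : (0:ℝ) < 1 - p := by linarith
  have heq : p = 1/2 → Real.log p * Real.log (1 - p) = (Real.log 2) ^ 2 := by
    rintro rfl
    norm_num
    rw [one_div, Real.log_inv]
    ring
  by_cases hp : p = 1/2
  · exact ⟨le_of_eq (heq hp), ⟨fun _ => hp, heq⟩⟩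
  · set s := Real.log ((1 - p) / p) with hs_def
    have hexp : Real.exp s = (1 - p) / p := Real.exp_log (by positivity)
    have hFs : F s = -Real.log p := by
      unfold F
      rw [hexp, show 1 + (1 - p) / p = 1 / p by field_simp; ring, one_div, Real.log_inv]
    have hFns : F (-s) = -Real.log (1 - p) := by
      unfold F
      rw [Real.exp_neg, hexp, show ((1 - p) / p)⁻¹ = p / (1 - p) by
        rw [inv_div],
        show 1 + p / (1 - p) = 1 / (1 - p) by field_simp; ring, one_div, Real.log_inv]
    have hsne : s ≠ 0 := by
      intro h
      apply hp
      have : Real.exp s = 1 := by rw [h, Real.exp_zero]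
      rw [hexp] at this
      field_simp at this
      linarith
    have hlt := F_mul_F_lt s hsne
    rw [hFs, hFns] at hlt
    have hlt' : Real.log p * Real.log (1 - p) < (Real.log 2) ^ 2 := by nlinarith
    exact ⟨le_of_lt hlt', ⟨fun h => absurd h (ne_of_lt hlt'), heq⟩⟩
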